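/- arXiv:1810.07974 — 6 statements merged into one kernel-verified Lean document; each statement's English description precedes it below -/
import Mathlib

section
/- For every continuously differentiable compactly supported function U : ℝ → H with U(t) ∈ D(A) for all t ∈ ℝ, every continuous function W : ℝ → H with W(t) = A(U(t)) for all t, and every a ∈ ℝ, one has ∫_{-∞}^{a} ⟨U(t), M₀ U'(t) + M₁ U(t) + W(t)⟩ e^{-2ρt} dt ≥ c₀ ∫_{-∞}^{a} ‖U(t)‖² e^{-2ρt} dt. -/
open MeasureTheory
open scoped InnerProductSpace

theorem statement6 {H : Type*}
    [NormedAddCommGroup H] [InnerProductSpace ℝ H] [CompleteSpace H]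
    (M₀ M₁ : H →L[ℝ] H) (hM₀_sa : IsSelfAdjoint M₀)
    (hM₀_nonneg : ∀ x : H, 0 ≤ ⟪x, M₀ x⟫_ℝ)
    (A : H →ₗ.[ℝ] H) (ρ c₀ : ℝ) (hρ : 0 < ρ) (hc₀ : 0 < c₀)
    (hcoerc : ∀ w : A.domain,
      c₀ * ‖(w : H)‖ ^ 2 ≤ ⟪(w : H), ρ • M₀ (w : H) + M₁ (w : H) + A w⟫_ℝ)
    (U : ℝ → H) (hU : ContDiff ℝ 1 U) (hUsupp : HasCompactSupport U)
    (hUdom : ∀ t, U t ∈ A.domain)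
    (W : ℝ → H) (hW : Continuous W) (hWA : ∀ t, W t = A ⟨U t, hUdom t⟩)
    (a : ℝ) :
    c₀ * ∫ t in Set.Iic a, ‖U t‖ ^ 2 * Real.exp (-2 * ρ * t) ≤
      ∫ t in Set.Iic a,
        ⟪U t, M₀ (deriv U t) + M₁ (U t) + W t⟫_ℝ * Real.exp (-2 * ρ * t) := by
  set E : ℝ → ℝ := fun t => Real.exp (-2 * ρ * t) with hE
  have hEcont : Continuous E := by continuity
  have hEpos : ∀ t, 0 < E t := fun t => Real.exp_pos _
  have hUcont : Continuous U := hU.continuous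
  have hU' : ∀ t, HasDerivAt U (deriv U t) t := fun t =>
    (hU.differentiable one_ne_zero t).hasDerivAt
  have hdU_cont : Continuous (deriv U) := hU.continuous_deriv le_rfl
  -- the auxiliary function F and its derivative
  set F : ℝ → ℝ := fun t => ⟪U t, M₀ (U t)⟫_ℝ * E t / 2 with hF
  set F' : ℝ → ℝ := fun t =>
    ⟪U t, M₀ (deriv U t)⟫_ℝ * E t - ρ * (⟪U t, M₀ (U t)⟫_ℝ * E t) with hF'
  have hsym : ∀ x y : H, ⟪M₀ x, y⟫_ℝ = ⟪x, M₀ y⟫_ℝ := fun x y =>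
    hM₀_sa.isSymmetric x y
  have hFderiv : ∀ t, HasDerivAt F (F' t) t := by
    intro t
    have hMU : HasDerivAt (fun s => M₀ (U s)) (M₀ (deriv U t)) t :=
      (M₀.hasFDerivAt).comp_hasDerivAt t (hU' t)
    have hQ : HasDerivAt (fun s => ⟪U s, M₀ (U s)⟫_ℝ)
        (⟪U t, M₀ (deriv U t)⟫_ℝ + ⟪deriv U t, M₀ (U t)⟫_ℝ) t :=
      (hU' t).inner ℝ hMU
    have hEd : HasDerivAt E ((-2 * ρ) * E t) t := by
      have h1 : HasDerivAt (fun s : ℝ => -2 * ρ * s) (-2 * ρ) t := by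
        simpa using (hasDerivAt_id t).const_mul (-2 * ρ)
      have := h1.exp
      rw [hE]
      convert this using 1 <;> ring_nf
    have hcomb := (hQ.mul hEd).div_const 2
    refine HasDerivAt.congr_deriv hcomb ?_
    have h2 : ⟪deriv U t, M₀ (U t)⟫_ℝ = ⟪U t, M₀ (deriv U t)⟫_ℝ := by
      rw [← hsym (deriv U t) (U t), real_inner_comm]
    rw [hF']
    rw [h2]
    ring
  -- supports and integrability
  have hF'cont : Continuous F' := by
    apply Continuous.sub
    · exact (hUcont.inner (M₀.continuous.comp hdU_cont)).mul hEcont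
    · exact continuous_const.mul ((hUcont.inner (M₀.continuous.comp hUcont)).mul hEcont)
  have hF'supp : HasCompactSupport F' := by
    apply hUsupp.mono
    intro t ht
    simp only [Function.mem_support, Ne] at ht ⊢
    intro h; apply ht
    simp [hF', h]
  have hF'int : IntegrableOn F' (Set.Iic a) :=
    (hF'cont.integrable_of_hasCompactSupport hF'supp).integrableOn
  set g₀ : ℝ → ℝ := fun t => ‖U t‖ ^ 2 * E t with hg₀
  set g₁ : ℝ → ℝ := fun t => ⟪U t, ρ • M₀ (U t) + M₁ (U t) + W t⟫_ℝ * E t with hg₁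
  have hg₀cont : Continuous g₀ := ((hUcont.norm.pow 2)).mul hEcont
  have hg₀supp : HasCompactSupport g₀ := by
    apply hUsupp.mono
    intro t ht
    simp only [Function.mem_support, Ne] at ht ⊢
    intro h; apply ht
    simp [hg₀, h]
  have hg₀int : IntegrableOn g₀ (Set.Iic a) :=
    (hg₀cont.integrable_of_hasCompactSupport hg₀supp).integrableOn
  have hg₁cont : Continuous g₁ := by
    apply Continuous.mul _ hEcont
    apply hUcont.inner
    exact (((M₀.continuous.comp hUcont).const_smul ρ).add
      (M₁.continuous.comp hUcont)).add hW
  have hg₁supp : HasCompactSupport g₁ := by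
    apply hUsupp.mono
    intro t ht
    simp only [Function.mem_support, Ne] at ht ⊢
    intro h; apply ht
    simp [hg₁, h]
  have hg₁int : IntegrableOn g₁ (Set.Iic a) :=
    (hg₁cont.integrable_of_hasCompactSupport hg₁supp).integrableOn
  -- the limit of F at -∞ is 0
  have hFsupp : HasCompactSupport F := by
    apply hUsupp.mono
    intro t ht
    simp only [Function.mem_support, Ne] at ht ⊢
    intro h; apply ht
    simp [hF, h]
  have hF0 : Filter.Tendsto F Filter.atBot (nhds 0) := by
    rw [hasCompactSupport_iff_eventuallyEq, Filter.coclosedCompact_eq_cocompact] at hFsupp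
    exact hFsupp.filter_mono atBot_le_cocompact |>.tendsto
  -- integral of F' over Iic a equals F a
  have hintF' : ∫ t in Set.Iic a, F' t = F a := by
    rw [integral_Iic_of_hasDerivAt_of_tendsto' (fun t _ => hFderiv t) hF'int hF0, sub_zero]
  have hFa : 0 ≤ F a :=
    div_nonneg (mul_nonneg (hM₀_nonneg (U a)) (hEpos a).le) (by norm_num)
  -- pointwise coercivity
  have hpt : ∀ t, c₀ * g₀ t ≤ g₁ t := by
    intro t
    have h := hcoerc ⟨U t, hUdom t⟩
    rw [← hWA t] at h
    have := mul_le_mul_of_nonneg_right h (hEpos t).le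
    calc c₀ * g₀ t = c₀ * ‖U t‖ ^ 2 * E t := by rw [hg₀]; ring
    _ ≤ g₁ t := this
  -- the RHS integrand equals F' + g₁
  have hRHS : (fun t => ⟪U t, M₀ (deriv U t) + M₁ (U t) + W t⟫_ℝ * E t) = fun t => F' t + g₁ t := by
    funext t
    simp only [hF', hg₁, inner_add_right, inner_smul_right]
    ring
  calc c₀ * ∫ t in Set.Iic a, ‖U t‖ ^ 2 * E t
      = ∫ t in Set.Iic a, c₀ * g₀ t := by rw [integral_const_mul]
    _ ≤ ∫ t in Set.Iic a, g₁ t :=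
        integral_mono (hg₀int.const_mul c₀) hg₁int hpt
    _ ≤ F a + ∫ t in Set.Iic a, g₁ t := le_add_of_nonneg_left hFa
    _ = (∫ t in Set.Iic a, F' t) + ∫ t in Set.Iic a, g₁ t := by rw [hintF']
    _ = ∫ t in Set.Iic a, (F' t + g₁ t) := (integral_add hF'int hg₁int).symm
    _ = ∫ t in Set.Iic a, ⟪U t, M₀ (deriv U t) + M₁ (U t) + W t⟫_ℝ * E t := by rw [hRHS]
end

section
/- For every continuously differentiable compactly supported function U : ℝ → H with U(t) ∈ D(A) for all t ∈ ℝ, every continuous function W : ℝ → H with W(t) = A(U(t)) for all t, and every a ∈ ℝ, one has the causal a priori estimate c₀ (∫_{-∞}^{a} ‖U(t)‖² e^{-2ρt} dt)^{1/2} ≤ (∫_{-∞}^{a} ‖M₀ U'(t) + M₁ U(t) + W(t)‖² e^{-2ρt} dt)^{1/2}. -/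
open MeasureTheory
open scoped InnerProductSpace

theorem statement7 {H : Type*}
    [NormedAddCommGroup H] [InnerProductSpace ℝ H] [CompleteSpace H]
    (M₀ M₁ : H →L[ℝ] H) (hM₀_sa : IsSelfAdjoint M₀)
    (hM₀_nonneg : ∀ x : H, 0 ≤ ⟪x, M₀ x⟫_ℝ)
    (A : H →ₗ.[ℝ] H) (ρ c₀ : ℝ) (hρ : 0 < ρ) (hc₀ : 0 < c₀)
    (hcoerc : ∀ w : A.domain,
      c₀ * ‖(w : H)‖ ^ 2 ≤ ⟪(w : H), ρ • M₀ (w : H) + M₁ (w : H) + A w⟫_ℝ)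
    (U : ℝ → H) (hU : ContDiff ℝ 1 U) (hUsupp : HasCompactSupport U)
    (hUdom : ∀ t, U t ∈ A.domain)
    (W : ℝ → H) (hW : Continuous W) (hWA : ∀ t, W t = A ⟨U t, hUdom t⟩)
    (a : ℝ) :
    c₀ * Real.sqrt (∫ t in Set.Iic a, ‖U t‖ ^ 2 * Real.exp (-2 * ρ * t)) ≤
      Real.sqrt (∫ t in Set.Iic a,
        ‖M₀ (deriv U t) + M₁ (U t) + W t‖ ^ 2 * Real.exp (-2 * ρ * t)) := by
  have hUc : Continuous U := hU.continuous
  have hUd : Differentiable ℝ U := hU.differentiable one_ne_zero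
  set V : ℝ → H := deriv U with hVdef
  have hVc : Continuous V := hU.continuous_deriv le_rfl
  set E : ℝ → ℝ := fun t => Real.exp (-2 * ρ * t) with hEdef
  have hEpos : ∀ t, 0 < E t := fun t => Real.exp_pos _
  have hEc : Continuous E := Real.continuous_exp.comp (by fun_prop)
  set F : ℝ → H := fun t => M₀ (V t) + M₁ (U t) + W t with hFdef
  have hFc : Continuous F := ((M₀.continuous.comp hVc).add (M₁.continuous.comp hUc)).add hW
  -- vanishing of W where U vanishes
  have hW0 : ∀ t, U t = 0 → W t = 0 := by
    intro t ht
    rw [hWA t]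
    have h0 : (⟨U t, hUdom t⟩ : A.domain) = 0 := Subtype.ext (by simp [ht])
    rw [h0]
    exact A.map_zero
  -- the compact set containing all supports
  set K : Set ℝ := tsupport U ∪ tsupport V with hKdef
  have hK : IsCompact K := hUsupp.union hUsupp.deriv
  have hKz : ∀ t ∉ K, U t = 0 ∧ V t = 0 ∧ W t = 0 ∧ F t = 0 := by
    intro t ht
    have h1 : U t = 0 := image_eq_zero_of_notMem_tsupport fun h => ht (Or.inl h)
    have h2 : V t = 0 := image_eq_zero_of_notMem_tsupport fun h => ht (Or.inr h)
    have h3 : W t = 0 := hW0 t h1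
    exact ⟨h1, h2, h3, by simp [hFdef, h1, h2, h3]⟩
  have hcs : ∀ (f : ℝ → ℝ), (∀ t ∉ K, f t = 0) → HasCompactSupport f := by
    intro f hf
    exact HasCompactSupport.intro hK hf
  have hcsH : ∀ (f : ℝ → H), (∀ t ∉ K, f t = 0) → HasCompactSupport f := by
    intro f hf
    exact HasCompactSupport.intro hK hf
  have hFsupp : HasCompactSupport F := hcsH F fun t ht => (hKz t ht).2.2.2
  have hint : ∀ (f : ℝ → ℝ), Continuous f → (∀ t ∉ K, f t = 0) →
      IntegrableOn f (Set.Iic a) := fun f hc h0 =>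
    (hc.integrable_of_hasCompactSupport (hcs f h0)).integrableOn
  -- the selfadjointness symmetry
  have hsym : ∀ x y : H, ⟪x, M₀ y⟫_ℝ = ⟪y, M₀ x⟫_ℝ := by
    intro x y
    rw [real_inner_comm]
    exact hM₀_sa.isSymmetric y x
  -- the energy function and its derivative
  set g : ℝ → ℝ := fun t => E t * ⟪U t, M₀ (U t)⟫_ℝ with hgdef
  set g' : ℝ → ℝ := fun t =>
    E t * (2 * ⟪V t, M₀ (U t)⟫_ℝ - 2 * ρ * ⟪U t, M₀ (U t)⟫_ℝ) with hg'def
  have hEd : ∀ t, HasDerivAt E (E t * (-2 * ρ)) t := by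
    intro t
    have h1 : HasDerivAt (fun t : ℝ => -2 * ρ * t) (-2 * ρ) t := by
      simpa using (hasDerivAt_id t).const_mul (-2 * ρ)
    exact h1.exp
  have hφd : ∀ t, HasDerivAt (fun t => ⟪U t, M₀ (U t)⟫_ℝ)
      (2 * ⟪V t, M₀ (U t)⟫_ℝ) t := by
    intro t
    have h1 : HasDerivAt U (V t) t := (hUd t).hasDerivAt
    have h2 : HasDerivAt (fun t => M₀ (U t)) (M₀ (V t)) t :=
      (M₀.hasFDerivAt (x := U t)).comp_hasDerivAt t h1
    have h3 := h1.inner ℝ h2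
    have h4 : ⟪U t, M₀ (V t)⟫_ℝ + ⟪V t, M₀ (U t)⟫_ℝ = 2 * ⟪V t, M₀ (U t)⟫_ℝ := by
      rw [hsym (U t) (V t)]; ring
    rw [← h4]
    exact h3
  have hgd : ∀ t, HasDerivAt g (g' t) t := by
    intro t
    have h := (hEd t).mul (hφd t)
    have heq : E t * (-2 * ρ) * ⟪U t, M₀ (U t)⟫_ℝ + E t * (2 * ⟪V t, M₀ (U t)⟫_ℝ)
        = g' t := by simp only [hg'def]; ring
    exact heq ▸ h
  have hg'c : Continuous g' :=
    hEc.mul ((continuous_const.mul (hVc.inner (M₀.continuous.comp hUc))).sub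
      (continuous_const.mul (hUc.inner (M₀.continuous.comp hUc))))
  have hg'int : IntegrableOn g' (Set.Iic a) := by
    refine hint g' hg'c fun t ht => ?_
    obtain ⟨h1, h2, -, -⟩ := hKz t ht
    simp [hg'def, h1, h2]
  have hgtend : Filter.Tendsto g Filter.atBot (nhds 0) := by
    have hgsupp : HasCompactSupport g := by
      refine hcs g fun t ht => ?_
      obtain ⟨h1, -, -, -⟩ := hKz t ht
      simp [hgdef, h1]
    rw [hasCompactSupport_iff_eventuallyEq, Filter.coclosedCompact_eq_cocompact] at hgsupp
    exact (hgsupp.filter_mono atBot_le_cocompact).tendsto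
  have hFTC : ∫ t in Set.Iic a, g' t = g a := by
    have := integral_Iic_of_hasDerivAt_of_tendsto' (fun x _ => hgd x) hg'int hgtend
    simpa using this
  -- pointwise coercivity estimate
  have hpt : ∀ t, c₀ * (‖U t‖ ^ 2 * E t) + (1 / 2) * g' t ≤ ⟪U t, F t⟫_ℝ * E t := by
    intro t
    have h0 := hcoerc ⟨U t, hUdom t⟩
    rw [← hWA t] at h0
    have hexp : ⟪U t, ρ • M₀ (U t) + M₁ (U t) + W t⟫_ℝ
        = ρ * ⟪U t, M₀ (U t)⟫_ℝ + ⟪U t, M₁ (U t)⟫_ℝ + ⟪U t, W t⟫_ℝ := by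
      simp [inner_add_right, real_inner_smul_right]
    have hexp2 : ⟪U t, F t⟫_ℝ
        = ⟪V t, M₀ (U t)⟫_ℝ + ⟪U t, M₁ (U t)⟫_ℝ + ⟪U t, W t⟫_ℝ := by
      simp only [hFdef, inner_add_right]
      rw [hsym (U t) (V t)]
    have h1 : c₀ * ‖U t‖ ^ 2 + (⟪V t, M₀ (U t)⟫_ℝ - ρ * ⟪U t, M₀ (U t)⟫_ℝ)
        ≤ ⟪U t, F t⟫_ℝ := by
      rw [hexp2]
      simp only [hexp] at h0
      linarith
    have h2 := mul_le_mul_of_nonneg_right h1 (hEpos t).le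
    have h3 : c₀ * (‖U t‖ ^ 2 * E t) + (1 / 2) * g' t
        = (c₀ * ‖U t‖ ^ 2 + (⟪V t, M₀ (U t)⟫_ℝ - ρ * ⟪U t, M₀ (U t)⟫_ℝ)) * E t := by
      simp only [hg'def]; ring
    rw [h3]
    exact h2
  -- integrabilities
  have hint1 : IntegrableOn (fun t => ‖U t‖ ^ 2 * E t) (Set.Iic a) := by
    refine hint _ (by fun_prop) fun t ht => by simp [(hKz t ht).1]
  have hint2 : IntegrableOn (fun t => ‖F t‖ ^ 2 * E t) (Set.Iic a) := by
    refine hint _ (by fun_prop) fun t ht => by simp [(hKz t ht).2.2.2]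
  have hint3 : IntegrableOn (fun t => ⟪U t, F t⟫_ℝ * E t) (Set.Iic a) := by
    refine hint _ ((hUc.inner hFc).mul hEc) fun t ht => by simp [(hKz t ht).1]
  set I1 : ℝ := ∫ t in Set.Iic a, ‖U t‖ ^ 2 * E t with hI1def
  set I2 : ℝ := ∫ t in Set.Iic a, ‖F t‖ ^ 2 * E t with hI2def
  set I3 : ℝ := ∫ t in Set.Iic a, ⟪U t, F t⟫_ℝ * E t with hI3def
  have hI1nonneg : 0 ≤ I1 :=
    setIntegral_nonneg measurableSet_Iic fun t _ =>
      mul_nonneg (by positivity) (hEpos t).le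
  have hI2nonneg : 0 ≤ I2 :=
    setIntegral_nonneg measurableSet_Iic fun t _ =>
      mul_nonneg (by positivity) (hEpos t).le
  -- step C : c₀ * I1 ≤ I3
  have hstepC : c₀ * I1 ≤ I3 := by
    have hmono : (∫ t in Set.Iic a, (c₀ * (‖U t‖ ^ 2 * E t) + (1 / 2) * g' t))
        ≤ I3 :=
      integral_mono ((hint1.const_mul c₀).add (hg'int.const_mul (1/2))) hint3
        fun t => hpt t
    rw [integral_add (hint1.const_mul c₀) (hg'int.const_mul (1/2)),
      integral_const_mul, integral_const_mul, hFTC] at hmono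
    have hga : 0 ≤ g a := mul_nonneg (hEpos a).le (hM₀_nonneg (U a))
    linarith
  -- step D : Cauchy-Schwarz, I3 ≤ √I1 * √I2
  have hstepD : I3 ≤ Real.sqrt I1 * Real.sqrt I2 := by
    set e : ℝ → ℝ := fun t => Real.exp (-ρ * t) with hedef
    have hE2 : ∀ t, E t = e t * e t := by
      intro t
      rw [hedef, hEdef]
      simp only [← Real.exp_add]
      ring_nf
    have hec : Continuous e := Real.continuous_exp.comp (by fun_prop)
    set f₁ : ℝ → ℝ := fun t => ‖U t‖ * e t with hf₁def
    set f₂ : ℝ → ℝ := fun t => ‖F t‖ * e t with hf₂def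
    have hf₁sq : ∀ t, f₁ t ^ 2 = ‖U t‖ ^ 2 * E t := by
      intro t; rw [hE2 t]; simp only [hf₁def]; ring
    have hf₂sq : ∀ t, f₂ t ^ 2 = ‖F t‖ ^ 2 * E t := by
      intro t; rw [hE2 t]; simp only [hf₂def]; ring
    have hmono : I3 ≤ ∫ t in Set.Iic a, f₁ t * f₂ t := by
      refine integral_mono hint3 ?_ fun t => ?_
      · refine hint _ (by fun_prop) fun t ht => by simp [hf₁def, (hKz t ht).1]
      · have h1 := mul_le_mul_of_nonneg_right (real_inner_le_norm (U t) (F t)) (hEpos t).le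
        calc ⟪U t, F t⟫_ℝ * E t ≤ ‖U t‖ * ‖F t‖ * E t := h1
        _ = f₁ t * f₂ t := by rw [hE2 t]; simp only [hf₁def, hf₂def]; ring
    have hpq : Real.HolderConjugate 2 2 := Real.HolderConjugate.two_two
    have hmem₁ : MemLp f₁ (ENNReal.ofReal 2) (volume.restrict (Set.Iic a)) := by
      refine ((hUc.norm.mul hec).memLp_of_hasCompactSupport
        (h'f := hcs f₁ fun t ht => by simp [hf₁def, (hKz t ht).1])).restrict _
    have hmem₂ : MemLp f₂ (ENNReal.ofReal 2) (volume.restrict (Set.Iic a)) := by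
      refine ((hFc.norm.mul hec).memLp_of_hasCompactSupport
        (h'f := hcs f₂ fun t ht => by simp [hf₂def, (hKz t ht).2.2.2])).restrict _
    have hHolder := integral_mul_le_Lp_mul_Lq_of_nonneg hpq
      (f := f₁) (g := f₂) (μ := volume.restrict (Set.Iic a))
      (Filter.Eventually.of_forall fun t => mul_nonneg (norm_nonneg _) (Real.exp_pos _).le)
      (Filter.Eventually.of_forall fun t => mul_nonneg (norm_nonneg _) (Real.exp_pos _).le)
      hmem₁ hmem₂
    have hrpow : ∀ x : ℝ, x ^ (2 : ℝ) = x ^ 2 := by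
      intro x
      rw [show (2 : ℝ) = ((2 : ℕ) : ℝ) by norm_num, Real.rpow_natCast]
    simp only [hrpow] at hHolder
    have h1 : (∫ t in Set.Iic a, f₁ t ^ 2) = I1 := by
      rw [hI1def]; exact integral_congr_ae (Filter.Eventually.of_forall fun t => hf₁sq t)
    have h2 : (∫ t in Set.Iic a, f₂ t ^ 2) = I2 := by
      rw [hI2def]; exact integral_congr_ae (Filter.Eventually.of_forall fun t => hf₂sq t)
    rw [h1, h2, ← Real.sqrt_eq_rpow, ← Real.sqrt_eq_rpow] at hHolder
    exact hmono.trans hHolder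
  -- conclude
  have hX2 : Real.sqrt I1 ^ 2 = I1 := Real.sq_sqrt hI1nonneg
  rcases eq_or_lt_of_le (Real.sqrt_nonneg I1) with hX0 | hXpos
  · rw [← hX0, mul_zero]
    exact Real.sqrt_nonneg I2
  · have hkey : c₀ * (Real.sqrt I1 * Real.sqrt I1) ≤ Real.sqrt I1 * Real.sqrt I2 := by
      have : Real.sqrt I1 * Real.sqrt I1 = I1 := by nlinarith [hX2]
      rw [this]
      exact hstepC.trans hstepD
    have := (mul_le_mul_iff_of_pos_left hXpos).mp (by linarith [hkey] : Real.sqrt I1 * (c₀ * Real.sqrt I1) ≤ Real.sqrt I1 * Real.sqrt I2)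
    exact this
end

section
/- Let ρ ≥ 1. For every continuously differentiable compactly supported function U : ℝ → H with U(t) ∈ D(C) for all t ∈ ℝ, every continuous function V : ℝ → X with V(t) = C(U(t)) and V(t) ∈ D(C^*) for all t, every continuous function W : ℝ → H with W(t) = C^*(V(t)) for all t, and every a ∈ ℝ, one has ∫_{-∞}^{a} ⟨U(t), η U'(t) + W(t)⟩ e^{-2ρt} dt ≥ (min{1, c₁}/2) ∫_{-∞}^{a} (‖U(t)‖² + ‖V(t)‖²) e^{-2ρt} dt. -/
open MeasureTheory LinearPMap
open scoped InnerProductSpace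

theorem statement8 {H X : Type*}
    [NormedAddCommGroup H] [InnerProductSpace ℝ H] [CompleteSpace H]
    [NormedAddCommGroup X] [InnerProductSpace ℝ X] [CompleteSpace X]
    (η : H →L[ℝ] H) (hη_sa : IsSelfAdjoint η) (hη_nonneg : ∀ x : H, 0 ≤ ⟪x, η x⟫_ℝ)
    (C : H →ₗ.[ℝ] X) (hC_dense : Dense (C.domain : Set H)) (hC_closed : C.IsClosed)
    (c₁ : ℝ) (hc₁ : 0 < c₁)
    (hcoerc : ∀ u : C.domain, c₁ * ‖(u : H)‖ ^ 2 ≤ ⟪(u : H), η (u : H)⟫_ℝ + ‖C u‖ ^ 2)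
    (ρ : ℝ) (hρ : 1 ≤ ρ)
    (U : ℝ → H) (hU : ContDiff ℝ 1 U) (hUsupp : HasCompactSupport U)
    (hUdom : ∀ t, U t ∈ C.domain)
    (V : ℝ → X) (hVcont : Continuous V) (hVC : ∀ t, V t = C ⟨U t, hUdom t⟩)
    (hVdom : ∀ t, V t ∈ C.adjoint.domain)
    (W : ℝ → H) (hWcont : Continuous W) (hWC : ∀ t, W t = C.adjoint ⟨V t, hVdom t⟩)
    (a : ℝ) :
    min 1 c₁ / 2 *
        ∫ t in Set.Iic a, (‖U t‖ ^ 2 + ‖V t‖ ^ 2) * Real.exp (-2 * ρ * t) ≤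
      ∫ t in Set.Iic a, ⟪U t, η (deriv U t) + W t⟫_ℝ * Real.exp (-2 * ρ * t) := by
  have hUcont : Continuous U := hU.continuous
  have hU'cont : Continuous (deriv U) := hU.continuous_deriv le_rfl
  -- the exponential weight
  set E : ℝ → ℝ := fun t => Real.exp (-2 * ρ * t) with hEdef
  have hEpos : ∀ t, 0 < E t := fun t => Real.exp_pos _
  have hEcont : Continuous E := by
    exact Real.continuous_exp.comp (by continuity)
  have hEd : ∀ t, HasDerivAt E (-2 * ρ * E t) t := by
    intro t
    have h : HasDerivAt (fun s : ℝ => -2 * ρ * s) (-2 * ρ) t := by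
      simpa using (hasDerivAt_id t).const_mul (-2 * ρ)
    have h2 := h.exp
    simp only [hEdef]
    convert h2 using 1
    ring
  -- the quadratic form
  set φ : ℝ → ℝ := fun t => ⟪U t, η (U t)⟫_ℝ with hφdef
  have hφnonneg : ∀ t, 0 ≤ φ t := fun t => hη_nonneg (U t)
  have hφcont : Continuous φ := hUcont.inner (η.continuous.comp hUcont)
  have hUd : ∀ t, HasDerivAt U (deriv U t) t := fun t =>
    (hU.differentiable one_ne_zero t).hasDerivAt
  have hφd : ∀ t, HasDerivAt φ (2 * ⟪U t, η (deriv U t)⟫_ℝ) t := by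
    intro t
    have hηUd : HasDerivAt (fun s => η (U s)) (η (deriv U t)) t :=
      η.hasFDerivAt.comp_hasDerivAt t (hUd t)
    have h := (hUd t).inner ℝ hηUd
    have hsym : ⟪deriv U t, η (U t)⟫_ℝ = ⟪U t, η (deriv U t)⟫_ℝ := by
      have h0 := hη_sa.isSymmetric (deriv U t) (U t)
      simp only [ContinuousLinearMap.coe_coe] at h0
      rw [← h0, real_inner_comm]
    refine h.congr_deriv ?_
    rw [hsym]; ring
  -- G = φ * E and its derivative D
  set G : ℝ → ℝ := fun t => φ t * E t with hGdef
  set D : ℝ → ℝ := fun t =>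
    2 * ⟪U t, η (deriv U t)⟫_ℝ * E t + φ t * (-2 * ρ * E t) with hDdef
  have hGd : ∀ t, HasDerivAt G (D t) t := fun t => (hφd t).mul (hEd t)
  -- vanishing facts off the support of U
  have hU0 : ∀ t, t ∉ tsupport U → U t = 0 := fun t ht =>
    image_eq_zero_of_notMem_tsupport ht
  have hU'0 : ∀ t, t ∉ tsupport U → deriv U t = 0 := by
    intro t ht
    by_contra h
    exact ht (support_deriv_subset (by simpa [Function.mem_support] using h))
  have hV0 : ∀ t, U t = 0 → V t = 0 := by
    intro t ht
    rw [hVC t]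
    have : (⟨U t, hUdom t⟩ : C.domain) = 0 := Subtype.ext ht
    rw [this]
    exact C.map_zero
  -- compact supports
  have hGsupp : HasCompactSupport G := by
    apply HasCompactSupport.intro hUsupp
    intro t ht
    simp [hGdef, hφdef, hU0 t ht]
  have hDsupp : HasCompactSupport D := by
    apply HasCompactSupport.intro hUsupp
    intro t ht
    simp [hDdef, hφdef, hU0 t ht, hU'0 t ht]
  have hDcont : Continuous D := by
    apply Continuous.add
    · exact ((continuous_const.mul (hUcont.inner (η.continuous.comp hU'cont))).mul hEcont)
    · exact hφcont.mul (continuous_const.mul hEcont)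
  have hDint : IntegrableOn D (Set.Iic a) :=
    (hDcont.integrable_of_hasCompactSupport hDsupp).integrableOn
  -- limit of G at -∞
  have hGtend : Filter.Tendsto G Filter.atBot (nhds 0) := by
    have h := hGsupp
    rw [hasCompactSupport_iff_eventuallyEq, Filter.coclosedCompact_eq_cocompact] at h
    exact (h.filter_mono _root_.atBot_le_cocompact).tendsto
  -- FTC on Iic a
  have hFTC : ∫ t in Set.Iic a, D t = G a := by
    have h := integral_Iic_of_hasDerivAt_of_tendsto' (fun t _ => hGd t) hDint hGtend
    simpa using h
  -- ⟪U, W⟫ = ‖V‖²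
  have hUW : ∀ t, ⟪U t, W t⟫_ℝ = ‖V t‖ ^ 2 := by
    intro t
    rw [hWC t, real_inner_comm]
    have h := adjoint_isFormalAdjoint hC_dense ⟨V t, hVdom t⟩ ⟨U t, hUdom t⟩
    rw [h]
    simp only []
    rw [← hVC t, real_inner_self_eq_norm_sq]
  -- second integrand
  set f₂ : ℝ → ℝ := fun t => (ρ * φ t + ‖V t‖ ^ 2) * E t with hf₂def
  have hf₂supp : HasCompactSupport f₂ := by
    apply HasCompactSupport.intro hUsupp
    intro t ht
    simp [hf₂def, hφdef, hU0 t ht, hV0 t (hU0 t ht)]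
  have hf₂cont : Continuous f₂ := by
    apply Continuous.mul _ hEcont
    exact (continuous_const.mul hφcont).add ((hVcont.norm).pow 2)
  have hf₂int : IntegrableOn f₂ (Set.Iic a) :=
    (hf₂cont.integrable_of_hasCompactSupport hf₂supp).integrableOn
  -- first integrand
  set f₁ : ℝ → ℝ := fun t => (‖U t‖ ^ 2 + ‖V t‖ ^ 2) * E t with hf₁def
  have hf₁supp : HasCompactSupport f₁ := by
    apply HasCompactSupport.intro hUsupp
    intro t ht
    simp [hf₁def, hU0 t ht, hV0 t (hU0 t ht)]
  have hf₁cont : Continuous f₁ := by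
    apply Continuous.mul _ hEcont
    exact ((hUcont.norm).pow 2).add ((hVcont.norm).pow 2)
  have hf₁int : IntegrableOn f₁ (Set.Iic a) :=
    (hf₁cont.integrable_of_hasCompactSupport hf₁supp).integrableOn
  -- rewrite the RHS integral
  have hptwise : ∀ t, ⟪U t, η (deriv U t) + W t⟫_ℝ * Real.exp (-2 * ρ * t)
      = D t / 2 + f₂ t := by
    intro t
    rw [inner_add_right, hUW t]
    simp only [hDdef, hf₂def, hφdef, hEdef]
    ring
  have hRHS : (∫ t in Set.Iic a, ⟪U t, η (deriv U t) + W t⟫_ℝ * Real.exp (-2 * ρ * t))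
      = G a / 2 + ∫ t in Set.Iic a, f₂ t := by
    simp_rw [hptwise]
    rw [integral_add (hDint.div_const 2) hf₂int, integral_div, hFTC]
  rw [hRHS]
  -- pointwise inequality
  have key : ∀ t, min 1 c₁ / 2 * f₁ t ≤ f₂ t := by
    intro t
    simp only [hf₁def, hf₂def]
    rw [← mul_assoc]
    apply mul_le_mul_of_nonneg_right _ (hEpos t).le
    have h1 := hcoerc ⟨U t, hUdom t⟩
    simp only [Submodule.coe_mk] at h1
    rw [← hVC t] at h1
    have h1' : c₁ * ‖U t‖ ^ 2 ≤ φ t + ‖V t‖ ^ 2 := h1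
    have h2 : min 1 c₁ ≤ 1 := min_le_left _ _
    have h3 : min 1 c₁ ≤ c₁ := min_le_right _ _
    have h4 := hφnonneg t
    nlinarith [mul_le_mul_of_nonneg_right h3 (sq_nonneg ‖U t‖),
      mul_le_mul_of_nonneg_right h2 (sq_nonneg ‖V t‖),
      mul_nonneg (by linarith : (0:ℝ) ≤ ρ - 1) h4]
  have hGa : 0 ≤ G a := mul_nonneg (hφnonneg a) (hEpos a).le
  have hmono : min 1 c₁ / 2 * ∫ t in Set.Iic a, f₁ t ≤ ∫ t in Set.Iic a, f₂ t := by
    rw [← integral_const_mul]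
    exact integral_mono (hf₁int.const_mul _) hf₂int key
  linarith
end

section
/- Suppose U : ℝ → H is continuously differentiable on an interval [T₀, T₁] (T₀ ≤ T₁) with U(t) ∈ D(C) for all t ∈ [T₀, T₁], V : ℝ → X is continuous on [T₀, T₁] with V(t) = C(U(t)) and V(t) ∈ D(C^*) for all t ∈ [T₀, T₁], W : ℝ → H is continuous on [T₀, T₁] with W(t) = C^*(V(t)) for all t ∈ [T₀, T₁], and the homogeneous equation η U'(t) + W(t) = 0 holds for all t ∈ [T₀, T₁]. Then the energy balance law (1/2) ⟨U(T₁), η U(T₁)⟩ + ∫_{T₀}^{T₁} ‖V(t)‖² dt = (1/2) ⟨U(T₀), η U(T₀)⟩ holds. -/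
open MeasureTheory LinearPMap
open scoped InnerProductSpace

theorem statement9 {H X : Type*}
    [NormedAddCommGroup H] [InnerProductSpace ℝ H] [CompleteSpace H]
    [NormedAddCommGroup X] [InnerProductSpace ℝ X] [CompleteSpace X]
    (η : H →L[ℝ] H) (hη_sa : IsSelfAdjoint η) (hη_nonneg : ∀ x : H, 0 ≤ ⟪x, η x⟫_ℝ)
    (C : H →ₗ.[ℝ] X) (hC_dense : Dense (C.domain : Set H)) (hC_closed : C.IsClosed)
    (T₀ T₁ : ℝ) (hT : T₀ ≤ T₁)
    (U U' : ℝ → H)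
    (hUderiv : ∀ t ∈ Set.Icc T₀ T₁, HasDerivWithinAt U (U' t) (Set.Icc T₀ T₁) t)
    (hU'cont : ContinuousOn U' (Set.Icc T₀ T₁))
    (hUdom : ∀ t ∈ Set.Icc T₀ T₁, U t ∈ C.domain)
    (V : ℝ → X) (hVcont : ContinuousOn V (Set.Icc T₀ T₁))
    (hVC : ∀ t, ∀ ht : t ∈ Set.Icc T₀ T₁, V t = C ⟨U t, hUdom t ht⟩)
    (hVdom : ∀ t ∈ Set.Icc T₀ T₁, V t ∈ C.adjoint.domain)
    (W : ℝ → H) (hWcont : ContinuousOn W (Set.Icc T₀ T₁))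
    (hWC : ∀ t, ∀ ht : t ∈ Set.Icc T₀ T₁, W t = C.adjoint ⟨V t, hVdom t ht⟩)
    (heq : ∀ t ∈ Set.Icc T₀ T₁, η (U' t) + W t = 0) :
    1 / 2 * ⟪U T₁, η (U T₁)⟫_ℝ + ∫ t in T₀..T₁, ‖V t‖ ^ 2 =
      1 / 2 * ⟪U T₀, η (U T₀)⟫_ℝ := by
  set f : ℝ → ℝ := fun t => 1 / 2 * ⟪U t, η (U t)⟫_ℝ with hf
  -- derivative of f
  have key : ∀ t ∈ Set.Icc T₀ T₁,
      HasDerivWithinAt f (-‖V t‖ ^ 2) (Set.Icc T₀ T₁) t := by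
    intro t ht
    have hU := hUderiv t ht
    have hηU : HasDerivWithinAt (fun s => η (U s)) (η (U' t)) (Set.Icc T₀ T₁) t :=
      η.hasFDerivAt.comp_hasDerivWithinAt t hU
    have h1 : HasDerivWithinAt (fun s => ⟪U s, η (U s)⟫_ℝ)
        (⟪U t, η (U' t)⟫_ℝ + ⟪U' t, η (U t)⟫_ℝ) (Set.Icc T₀ T₁) t :=
      hU.inner ℝ hηU
    have hsym : ⟪U t, η (U' t)⟫_ℝ = ⟪U' t, η (U t)⟫_ℝ := by
      rw [real_inner_comm]; exact hη_sa.isSymmetric _ _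
    have hval : ⟪U' t, η (U t)⟫_ℝ = -‖V t‖ ^ 2 := by
      have hηU' : η (U' t) = -W t := by
        have := heq t ht
        linear_combination (norm := module) this
      have : ⟪U' t, η (U t)⟫_ℝ = ⟪η (U' t), U t⟫_ℝ :=
        (hη_sa.isSymmetric _ _).symm
      rw [this, hηU', inner_neg_left, hWC t ht]
      have hadj := (C.adjoint_isFormalAdjoint hC_dense) ⟨V t, hVdom t ht⟩
          ⟨U t, hUdom t ht⟩
      rw [hadj, ← hVC t ht, real_inner_self_eq_norm_sq]
    have h2 := (h1.const_mul (1 / 2 : ℝ))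
    refine h2.congr_deriv ?_
    rw [hsym, hval]; ring
  have hfcont : ContinuousOn f (Set.Icc T₀ T₁) := by
    have hUcont : ContinuousOn U (Set.Icc T₀ T₁) := fun t ht =>
      (hUderiv t ht).continuousWithinAt
    exact (continuousOn_const.mul
      (hUcont.inner (η.continuous.comp_continuousOn hUcont)))
  have hVint : IntervalIntegrable (fun t => -‖V t‖ ^ 2) volume T₀ T₁ := by
    apply ContinuousOn.intervalIntegrable
    rw [Set.uIcc_of_le hT]
    exact ((hVcont.norm.pow 2).neg)
  have hFTC := intervalIntegral.integral_eq_sub_of_hasDeriv_right_of_le hT hfcont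
    (fun t ht => (key t (Set.mem_Icc_of_Ioo ht)).mono_of_mem_nhdsWithin
      (by
        have : Set.Icc T₀ T₁ ∈ nhdsWithin t (Set.Ioi t) :=
          mem_nhdsWithin_of_mem_nhds (Icc_mem_nhds ht.1 ht.2)
        exact this)) hVint
  have hint : (∫ t in T₀..T₁, -‖V t‖ ^ 2) = -∫ t in T₀..T₁, ‖V t‖ ^ 2 := by
    simp [intervalIntegral.integral_neg]
  rw [hint] at hFTC
  simp only [hf] at hFTC
  linarith
end

section
/- Let U₀, U₁, U₂ ∈ H be pairwise orthogonal with U₀ ∈ D(C), U₁ ∈ N(C), U₂ ∈ N(C), and set U := U₀ + U₁ + U₂ (so U ∈ D(C) and C U = C U₀). Assume P U₁ = U₁, ⟨U₁, P U₂⟩ = 0, ‖U₀‖ ≤ k₀ ‖C U₀‖, and ‖U₂‖ ≤ k₁ ‖P U₂‖. Then ‖U‖² ≤ max{2, 2 k₁², k₀² (1 + 2 max{1, k₁²})} · (‖C U‖² + ‖P U‖²); equivalently, ‖P U‖² + ‖C U‖² ≥ c_* ‖U‖² with c_* = 1 / max{2, 2 k₁², k₀² (1 + 2 max{1, k₁²})}.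 -/
open scoped InnerProductSpace

lemma aux_statement11 (k₀ k₁ a b c q p r s : ℝ)
    (hk₀0 : 0 ≤ k₀) (hk₁0 : 0 ≤ k₁)
    (ha : 0 ≤ a) (hb : 0 ≤ b) (hc : 0 ≤ c) (hq : 0 ≤ q) (hp : 0 ≤ p)
    (hr : 0 ≤ r) (hs : 0 ≤ s)
    (h1 : a ≤ k₀ * s) (h2 : c ≤ k₁ * q) (h3 : r ≤ a)
    (h4 : b ^ 2 + q ^ 2 ≤ (p + r) ^ 2) :
    a ^ 2 + b ^ 2 + c ^ 2 ≤
      max (max 2 (2 * k₁ ^ 2)) (k₀ ^ 2 * (1 + 2 * max 1 (k₁ ^ 2))) * (s ^ 2 + p ^ 2) := by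
  set m := max 1 (k₁ ^ 2) with hm
  set M := max (max 2 (2 * k₁ ^ 2)) (k₀ ^ 2 * (1 + 2 * m)) with hM
  have hm1 : (1 : ℝ) ≤ m := le_max_left _ _
  have hm2 : k₁ ^ 2 ≤ m := le_max_right _ _
  have hM1 : 2 * m ≤ M := by
    rcases max_cases (1 : ℝ) (k₁ ^ 2) with ⟨h, _⟩ | ⟨h, _⟩ <;> rw [hm, h]
    · exact le_trans (by norm_num) (le_max_of_le_left (le_max_left _ _))
    · exact le_max_of_le_left (le_max_right _ _)
  have hM2 : k₀ ^ 2 * (1 + 2 * m) ≤ M := le_max_right _ _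
  have ha2 : a ^ 2 ≤ k₀ ^ 2 * s ^ 2 := by nlinarith
  have hc2 : c ^ 2 ≤ k₁ ^ 2 * q ^ 2 := by nlinarith
  have hkey : b ^ 2 + q ^ 2 ≤ 2 * p ^ 2 + 2 * a ^ 2 := by
    nlinarith [sq_nonneg (p - r), mul_le_mul h3 h3 hr ha]
  have hstep : a ^ 2 + b ^ 2 + c ^ 2 ≤ k₀ ^ 2 * (1 + 2 * m) * s ^ 2 + 2 * m * p ^ 2 := by
    nlinarith [mul_le_mul_of_nonneg_right hm2 (sq_nonneg q),
      mul_le_mul_of_nonneg_right hm1 (sq_nonneg b),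
      mul_le_mul_of_nonneg_left hkey (le_trans zero_le_one hm1),
      sq_nonneg s, sq_nonneg k₀]
  calc a ^ 2 + b ^ 2 + c ^ 2 ≤ k₀ ^ 2 * (1 + 2 * m) * s ^ 2 + 2 * m * p ^ 2 := hstep
    _ ≤ M * s ^ 2 + M * p ^ 2 :=
        add_le_add (mul_le_mul_of_nonneg_right hM2 (sq_nonneg s))
          (mul_le_mul_of_nonneg_right hM1 (sq_nonneg p))
    _ = M * (s ^ 2 + p ^ 2) := by ring

theorem statement11 {H X : Type*}
    [NormedAddCommGroup H] [InnerProductSpace ℝ H] [CompleteSpace H]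
    [NormedAddCommGroup X] [InnerProductSpace ℝ X]
    (C : H →ₗ.[ℝ] X)
    (K : Submodule ℝ H) (hK : IsClosed (K : Set H)) [K.HasOrthogonalProjection]
    (k₀ k₁ : ℝ) (hk₀0 : 0 ≤ k₀) (hk₁0 : 0 ≤ k₁)
    (U₀ U₁ U₂ : H)
    -- pairwise orthogonality
    (h01 : ⟪U₀, U₁⟫_ℝ = 0) (h02 : ⟪U₀, U₂⟫_ℝ = 0) (h12 : ⟪U₁, U₂⟫_ℝ = 0)
    -- membership: `U₀ ∈ D(C)`, `U₁, U₂ ∈ N(C)`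
    (hU₀dom : U₀ ∈ C.domain)
    (hU₁dom : U₁ ∈ C.domain) (hU₁ker : C ⟨U₁, hU₁dom⟩ = 0)
    (hU₂dom : U₂ ∈ C.domain) (hU₂ker : C ⟨U₂, hU₂dom⟩ = 0)
    -- `P U₁ = U₁`, `⟪U₁, P U₂⟫ = 0`
    (hPU₁ : ((K.orthogonalProjectionOnto U₁ : ↥K) : H) = U₁)
    (h1P2 : ⟪U₁, ((K.orthogonalProjectionOnto U₂ : ↥K) : H)⟫_ℝ = 0)
    -- the two basic estimates
    (hk₀ : ‖U₀‖ ≤ k₀ * ‖C ⟨U₀, hU₀dom⟩‖)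
    (hk₁ : ‖U₂‖ ≤ k₁ * ‖((K.orthogonalProjectionOnto U₂ : ↥K) : H)‖) :
    -- conclusion: `U = U₀ + U₁ + U₂ ∈ D(C)`, `C U = C U₀`, and the norm estimate
    ∃ hU : U₀ + U₁ + U₂ ∈ C.domain,
      C ⟨U₀ + U₁ + U₂, hU⟩ = C ⟨U₀, hU₀dom⟩ ∧
      ‖U₀ + U₁ + U₂‖ ^ 2 ≤
        max (max 2 (2 * k₁ ^ 2)) (k₀ ^ 2 * (1 + 2 * max 1 (k₁ ^ 2))) *
          (‖C ⟨U₀ + U₁ + U₂, hU⟩‖ ^ 2 +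
            ‖((K.orthogonalProjectionOnto (U₀ + U₁ + U₂) : ↥K) : H)‖ ^ 2) := by
  have hU : U₀ + U₁ + U₂ ∈ C.domain := add_mem (add_mem hU₀dom hU₁dom) hU₂dom
  have hCeq : C ⟨U₀ + U₁ + U₂, hU⟩ = C ⟨U₀, hU₀dom⟩ := by
    have h : (⟨U₀ + U₁ + U₂, hU⟩ : C.domain)
        = ⟨U₀, hU₀dom⟩ + ⟨U₁, hU₁dom⟩ + ⟨U₂, hU₂dom⟩ := rfl
    rw [h, C.map_add, C.map_add, hU₁ker, hU₂ker, add_zero, add_zero]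
  refine ⟨hU, hCeq, ?_⟩
  rw [hCeq]
  set p0 : H := ((K.orthogonalProjectionOnto U₀ : K) : H) with hp0
  set p2 : H := ((K.orthogonalProjectionOnto U₂ : K) : H) with hp2
  have hPsum : ((K.orthogonalProjectionOnto (U₀ + U₁ + U₂) : K) : H)
      = p0 + U₁ + p2 := by
    rw [map_add, map_add, Submodule.coe_add, Submodule.coe_add, hPU₁]
  rw [hPsum]
  have h012 : ⟪U₀ + U₁, U₂⟫_ℝ = 0 := by rw [inner_add_left, h02, h12, add_zero]
  have hn : ‖U₀ + U₁ + U₂‖ ^ 2 = ‖U₀‖ ^ 2 + ‖U₁‖ ^ 2 + ‖U₂‖ ^ 2 := by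
    rw [norm_add_sq_real, h012, norm_add_sq_real, h01]; ring
  have hbq : ‖U₁ + p2‖ ^ 2 = ‖U₁‖ ^ 2 + ‖p2‖ ^ 2 := by
    rw [norm_add_sq_real, h1P2]; ring
  have htri : ‖U₁ + p2‖ ≤ ‖p0 + U₁ + p2‖ + ‖p0‖ := by
    have h : U₁ + p2 = (p0 + U₁ + p2) - p0 := by abel
    rw [h]
    exact norm_sub_le _ _
  have hbq' : ‖U₁‖ ^ 2 + ‖p2‖ ^ 2 ≤ (‖p0 + U₁ + p2‖ + ‖p0‖) ^ 2 := by
    rw [← hbq]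
    have h1 : (0 : ℝ) ≤ ‖U₁ + p2‖ := norm_nonneg _
    have h2 : (0 : ℝ) ≤ ‖p0 + U₁ + p2‖ + ‖p0‖ :=
      add_nonneg (norm_nonneg _) (norm_nonneg _)
    exact pow_le_pow_left₀ h1 htri 2
  have hp0le : ‖p0‖ ≤ ‖U₀‖ := by
    rw [hp0, Submodule.norm_coe]
    calc ‖K.orthogonalProjectionOnto U₀‖ ≤ ‖K.orthogonalProjectionOnto‖ * ‖U₀‖ :=
          (K.orthogonalProjectionOnto).le_opNorm U₀
      _ ≤ 1 * ‖U₀‖ :=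
          mul_le_mul_of_nonneg_right (Submodule.orthogonalProjectionOnto_norm_le K) (norm_nonneg _)
      _ = ‖U₀‖ := one_mul _
  rw [hn]
  exact aux_statement11 k₀ k₁ ‖U₀‖ ‖U₁‖ ‖U₂‖ ‖p2‖ ‖p0 + U₁ + p2‖ ‖p0‖
    ‖C ⟨U₀, hU₀dom⟩‖ hk₀0 hk₁0 (norm_nonneg _) (norm_nonneg _) (norm_nonneg _)
    (norm_nonneg _) (norm_nonneg _) (norm_nonneg _) (norm_nonneg _)
    hk₀ hk₁ hp0le hbq'
end

section
/- Let U₀ ∈ D(C) be orthogonal to N(C) and satisfy c ‖U₀‖ ≤ ‖C U₀‖, and let U₁ ∈ N(C) ∩ K. Then, with U := U₀ + U₁ (so U ∈ D(C) and C U = C U₀), one has ‖P U‖² + ‖C U‖² ≥ min{1, c²} ‖U‖². -/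
open scoped InnerProductSpace

theorem statement12 {H X : Type*}
    [NormedAddCommGroup H] [InnerProductSpace ℝ H] [CompleteSpace H]
    [NormedAddCommGroup X] [InnerProductSpace ℝ X]
    (C : H →ₗ.[ℝ] X)
    (K : Submodule ℝ H) (hK : IsClosed (K : Set H)) [K.HasOrthogonalProjection]
    (c : ℝ) (hc0 : 0 < c)
    (U₀ U₁ : H)
    (hU₀dom : U₀ ∈ C.domain)
    -- `U₀` is orthogonal to `N(C)`
    (hU₀orth : ∀ (v : H) (hv : v ∈ C.domain), C ⟨v, hv⟩ = 0 → ⟪U₀, v⟫_ℝ = 0)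
    (hc : c * ‖U₀‖ ≤ ‖C ⟨U₀, hU₀dom⟩‖)
    -- `U₁ ∈ N(C) ∩ K`
    (hU₁dom : U₁ ∈ C.domain) (hU₁ker : C ⟨U₁, hU₁dom⟩ = 0) (hU₁K : U₁ ∈ K) :
    -- conclusion: `U = U₀ + U₁ ∈ D(C)`, `C U = C U₀`, and the estimate
    ∃ hU : U₀ + U₁ ∈ C.domain,
      C ⟨U₀ + U₁, hU⟩ = C ⟨U₀, hU₀dom⟩ ∧
      min 1 (c ^ 2) * ‖U₀ + U₁‖ ^ 2 ≤
        ‖((K.orthogonalProjectionOnto (U₀ + U₁) : ↥K) : H)‖ ^ 2 +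
          ‖C ⟨U₀ + U₁, hU⟩‖ ^ 2 := by
  have hU : U₀ + U₁ ∈ C.domain := C.domain.add_mem hU₀dom hU₁dom
  have hCeq : C ⟨U₀ + U₁, hU⟩ = C ⟨U₀, hU₀dom⟩ := by
    have h : (⟨U₀ + U₁, hU⟩ : C.domain) = ⟨U₀, hU₀dom⟩ + ⟨U₁, hU₁dom⟩ := rfl
    rw [h, C.map_add, hU₁ker, add_zero]
  refine ⟨hU, hCeq, ?_⟩
  set u := U₀ + U₁ with hu
  set p : H := (K.orthogonalProjectionOnto u : H) with hp
  have hwmem : u - p ∈ Kᗮ := K.sub_starProjection_mem_orthogonal u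
  have hpmem : p ∈ K := (K.orthogonalProjectionOnto u).2
  have h1 : ⟪p, u - p⟫_ℝ = 0 :=
    Submodule.inner_right_of_mem_orthogonal hpmem hwmem
  have h2 : ⟪U₁, u - p⟫_ℝ = 0 :=
    Submodule.inner_right_of_mem_orthogonal hU₁K hwmem
  have h3 : ⟪U₀, U₁⟫_ℝ = 0 := hU₀orth U₁ hU₁dom hU₁ker
  have e1 : ‖u‖ ^ 2 = ‖p‖ ^ 2 + ‖u - p‖ ^ 2 := by
    have h := norm_add_sq_real p (u - p)
    have h' : p + (u - p) = u := by abel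
    rw [h1, h'] at h
    linarith
  have e2 : ‖U₀‖ ^ 2 = ‖p - U₁‖ ^ 2 + ‖u - p‖ ^ 2 := by
    have h4 : ⟪p - U₁, u - p⟫_ℝ = 0 := by
      rw [inner_sub_left, h1, h2]; ring
    have h := norm_add_sq_real (p - U₁) (u - p)
    have h' : (p - U₁) + (u - p) = U₀ := by rw [hu]; abel
    rw [h4, h'] at h
    linarith
  have e3 : ‖u‖ ^ 2 = ‖U₀‖ ^ 2 + ‖U₁‖ ^ 2 := by
    have h := norm_add_sq_real U₀ U₁
    rw [h3] at h
    rw [hu]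
    linarith
  rw [hCeq]
  have hcn : c * ‖U₀‖ ≥ 0 := mul_nonneg hc0.le (norm_nonneg _)
  have hCsq : c ^ 2 * ‖U₀‖ ^ 2 ≤ ‖C ⟨U₀, hU₀dom⟩‖ ^ 2 := by nlinarith
  have hmin1 : min 1 (c ^ 2) ≤ 1 := min_le_left _ _
  have hmin2 : min 1 (c ^ 2) ≤ c ^ 2 := min_le_right _ _
  nlinarith [sq_nonneg (‖p - U₁‖), sq_nonneg (‖u - p‖), sq_nonneg ‖U₀‖, sq_nonneg ‖U₁‖]
end
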